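/- In any GK-model whose accessibility relation is crisp (S(x,y) ∈ {0,1}) and is an equivalence relation (reflexive, transitive, symmetric as a {0,1}-valued relation), the formula □(□φ ∨ ψ) → (□φ ∨ □ψ) is valid. -/

import Mathlib

open scoped Classical

noncomputable def gimp (a b : ℝ) : ℝ := if a ≤ b then 1 else b

inductive GForm : Type where
  | bot : GForm
  | var : ℕ → GForm
  | and : GForm → GForm → GForm
  | or : GForm → GForm → GForm
  | imp : GForm → GForm → GForm
  | box : GForm → GForm
  | dia : GForm → GForm

def GForm.neg (φ : GForm) : GForm := φ.imp .bot

noncomputable def ev {W : Type} (S : W → W → ℝ) (e : ℕ → W → ℝ) : GForm → W → ℝ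
  | .bot, _ => 0
  | .var p, x => e p x
  | .and φ ψ, x => min (ev S e φ x) (ev S e ψ x)
  | .or φ ψ, x => max (ev S e φ x) (ev S e ψ x)
  | .imp φ ψ, x => gimp (ev S e φ x) (ev S e ψ x)
  | .box φ, x => ⨅ y, gimp (S x y) (ev S e φ y)
  | .dia φ, x => ⨆ y, min (S x y) (ev S e φ y)

lemma gimp_mem {a b : ℝ} (hb : b ∈ Set.Icc (0:ℝ) 1) : gimp a b ∈ Set.Icc (0:ℝ) 1 := by
  unfold gimp; split
  · exact ⟨zero_le_one, le_refl 1⟩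
  · exact hb

lemma gimp_one_left {b : ℝ} (hb : b ≤ 1) : gimp 1 b = b := by
  unfold gimp; split
  · linarith
  · rfl

lemma gimp_zero_left {b : ℝ} (hb : 0 ≤ b) : gimp 0 b = 1 := by
  unfold gimp; rw [if_pos hb]

lemma ev_mem {W : Type} [Nonempty W] (S : W → W → ℝ) (e : ℕ → W → ℝ)
    (hS : ∀ x y, S x y ∈ Set.Icc (0:ℝ) 1) (he : ∀ p x, e p x ∈ Set.Icc (0:ℝ) 1) :
    ∀ φ x, ev S e φ x ∈ Set.Icc (0:ℝ) 1 := by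
  intro φ
  induction φ with
  | bot => intro x; exact ⟨le_refl 0, zero_le_one⟩
  | var p => exact he p
  | and φ ψ ih1 ih2 =>
    intro x
    exact ⟨le_min (ih1 x).1 (ih2 x).1, min_le_of_left_le (ih1 x).2⟩
  | or φ ψ ih1 ih2 =>
    intro x
    exact ⟨le_max_of_le_left (ih1 x).1, max_le (ih1 x).2 (ih2 x).2⟩
  | imp φ ψ ih1 ih2 =>
    intro x; exact gimp_mem (ih2 x)
  | box φ ih =>
    intro x
    simp only [ev]
    have hbb : BddBelow (Set.range fun y => gimp (S x y) (ev S e φ y)) := by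
      refine ⟨0, ?_⟩; rintro r ⟨y, rfl⟩; exact (gimp_mem (ih y)).1
    constructor
    · exact le_ciInf fun y => (gimp_mem (ih y)).1
    · exact le_trans (ciInf_le hbb (Classical.arbitrary W))
        (gimp_mem (ih (Classical.arbitrary W))).2
  | dia φ ih =>
    intro x
    simp only [ev]
    have hba : BddAbove (Set.range fun y => min (S x y) (ev S e φ y)) := by
      refine ⟨1, ?_⟩; rintro r ⟨y, rfl⟩; exact min_le_of_left_le (hS x y).2
    constructor
    · exact le_trans (le_min (hS x (Classical.arbitrary W)).1 (ih (Classical.arbitrary W)).1)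
        (le_ciSup hba (Classical.arbitrary W))
    · exact ciSup_le fun y => min_le_of_left_le (hS x y).2

lemma box_congr {W : Type} [Nonempty W] (S : W → W → ℝ) (e : ℕ → W → ℝ)
    (hcrisp : ∀ x y, S x y = 0 ∨ S x y = 1)
    (htrans : ∀ x y z, min (S x y) (S y z) ≤ S x z)
    (hsymm : ∀ x y, S x y = S y x)
    (hS : ∀ x y, S x y ∈ Set.Icc (0:ℝ) 1)
    {x y : W} (hxy : S x y = 1) (φ : GForm) :
    ev S e (.box φ) y = ev S e (.box φ) x := by
  simp only [ev]
  have hz : ∀ z, S y z = S x z := by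
    intro z
    have h1 : min (S y x) (S x z) ≤ S y z := htrans y x z
    have h2 : min (S x y) (S y z) ≤ S x z := htrans x y z
    rw [hsymm y x, hxy] at h1
    rw [hxy] at h2
    have := (hS y z).2
    have := (hS x z).2
    simp only [min_def] at h1 h2
    rcases hcrisp x z with h | h <;> rcases hcrisp y z with h' | h' <;>
      simp only [h, h'] at h1 h2 ⊢ <;> norm_num at *
  exact iInf_congr fun z => by rw [hz z]

theorem stmt14 (W : Type) [Nonempty W] (S : W → W → ℝ) (e : ℕ → W → ℝ)
    (hS : ∀ x y, S x y ∈ Set.Icc (0:ℝ) 1) (he : ∀ p x, e p x ∈ Set.Icc (0:ℝ) 1)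
    (hcrisp : ∀ x y, S x y = 0 ∨ S x y = 1)
    (hrefl : ∀ x, S x x = 1)
    (htrans : ∀ x y z, min (S x y) (S y z) ≤ S x z)
    (hsymm : ∀ x y, S x y = S y x)
    (φ ψ : GForm) (x : W) :
    ev S e (.imp (.box (.or (.box φ) ψ)) (.or (.box φ) (.box ψ))) x = 1 := by
  have hmem := ev_mem S e hS he
  set a := ev S e (.box φ) x with ha
  set b := ev S e (.box ψ) x with hb
  have key : ev S e (.box (.or (.box φ) ψ)) x ≤ max a b := by
    refine le_of_forall_pos_le_add ?_
    intro ε hε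
    have hblt : b < b + ε := by linarith
    have : (⨅ y, gimp (S x y) (ev S e ψ y)) < b + ε := by
      rw [hb]; simpa only [ev, hb] using hblt
    obtain ⟨y, hy⟩ := exists_lt_of_ciInf_lt this
    have hbbL : BddBelow (Set.range fun y => gimp (S x y) (ev S e (.or (.box φ) ψ) y)) := by
      refine ⟨0, ?_⟩; rintro r ⟨z, rfl⟩; exact (gimp_mem (hmem _ z)).1
    have hL : ev S e (.box (.or (.box φ) ψ)) x ≤ gimp (S x y) (ev S e (.or (.box φ) ψ) y) := by
      simp only [ev] at *
      exact ciInf_le hbbL y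
    rcases hcrisp x y with h0 | h1
    · rw [h0, gimp_zero_left (hmem _ y).1] at hL
      have : (1:ℝ) ≤ max a b + ε := by
        have := (hmem (.box ψ) x).2
        rw [← hb] at this
        have hab : b ≤ max a b := le_max_right a b
        rw [h0, gimp_zero_left (hmem ψ y).1] at hy
        linarith
      linarith
    · rw [h1] at hL hy
      rw [gimp_one_left (hmem _ y).2] at hL
      rw [gimp_one_left (hmem ψ y).2] at hy
      have hevor : ev S e (.or (.box φ) ψ) y = max (ev S e (.box φ) y) (ev S e ψ y) := by
        simp only [ev]
      rw [hevor, box_congr S e hcrisp htrans hsymm hS h1 φ, ← ha] at hL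
      calc ev S e (.box (.or (.box φ) ψ)) x ≤ max a (ev S e ψ y) := hL
        _ ≤ max a (b + ε) := max_le_max (le_refl a) (le_of_lt hy)
        _ ≤ max a b + ε := by
            rcases le_total a (b + ε) with h | h
            · rw [max_eq_right h]; exact add_le_add_left (le_max_right a b) ε
            · rw [max_eq_left h]; exact le_add_of_le_of_nonneg (le_max_left a b) (le_of_lt hε)
  have e1 : ev S e (.imp (.box (.or (.box φ) ψ)) (.or (.box φ) (.box ψ))) x
      = gimp (ev S e (.box (.or (.box φ) ψ)) x) (max a b) := rfl
  rw [e1, gimp, if_pos key]
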